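/- For every Morse gauge M there exists a constant C ≥ 0 such that the following holds. Let X be a connected simple graph with its path metric d, let γ : ℤ → V(X) be an M-Morse bi-infinite geodesic, let Y₁ and Y₂ be connected simple graphs each of infinite diameter with path metrics d₁ and d₂, and let ι : V(Y₁) × V(Y₂) → V(X) be a map satisfying d(ι(a,b), ι(a′,b′)) = d₁(a,a′) + d₂(b,b′) for all a, a′ ∈ V(Y₁) and b, b′ ∈ V(Y₂) (an isometrically embedded product of two graphs of infinite diameter). Then the intersection of the image of γ with the image of ι has diameter at most C in X. -/
import Mathlib

open SimpleGraph

set_option linter.all false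


/-- `β : {0,…,m} → V` is an `(A,B)`-quasigeodesic in the graph `X`: consecutive points are
equal or adjacent, and `|i−j|/A − B ≤ d(β i, β j) ≤ A|i−j| + B` for all `i, j`. -/
def IsQuasigeodesic {V : Type*} (X : SimpleGraph V) (A B : ℝ) {m : ℕ}
    (β : Fin (m + 1) → V) : Prop :=
  (∀ i : Fin m, β i.castSucc = β i.succ ∨ X.Adj (β i.castSucc) (β i.succ)) ∧
  ∀ i j : Fin (m + 1),
    |((i : ℕ) : ℝ) - ((j : ℕ) : ℝ)| / A - B ≤ (X.dist (β i) (β j) : ℝ) ∧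
    (X.dist (β i) (β j) : ℝ) ≤ A * |((i : ℕ) : ℝ) - ((j : ℕ) : ℝ)| + B

/-- `γ : ℤ → V` is a bi-infinite geodesic in the graph `X`. -/
def IsBiInfGeodesic {V : Type*} (X : SimpleGraph V) (γ : ℤ → V) : Prop :=
  ∀ s t : ℤ, (X.dist (γ s) (γ t) : ℤ) = |s - t|

/-- A bi-infinite geodesic `γ` is `M`-Morse if every `(A,B)`-quasigeodesic with endpoints on
the image of `γ` stays in the closed `M(A,B)`-neighbourhood of the image of `γ`. -/
def IsMorse {V : Type*} (X : SimpleGraph V) (M : ℝ → ℝ → ℝ) (γ : ℤ → V) : Prop :=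
  ∀ A B : ℝ, 1 ≤ A → 0 ≤ B → ∀ (m : ℕ) (β : Fin (m + 1) → V),
    IsQuasigeodesic X A B β →
    β 0 ∈ Set.range γ → β (Fin.last m) ∈ Set.range γ →
    ∀ i : Fin (m + 1), ∃ t : ℤ, (X.dist (β i) (γ t) : ℝ) ≤ M A B

private lemma walk_dist_le {V : Type*} {G : SimpleGraph V} (hG : G.Connected) {u v : V}
    (w : G.Walk u v) : ∀ s t : ℕ, s ≤ t → G.dist (w.getVert s) (w.getVert t) ≤ t - s := by
  induction w with
  | nil => intro s t _; simp [Walk.getVert, SimpleGraph.dist_self]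
  | @cons x y z h p ih =>
    intro s t hst
    cases s with
    | zero =>
      cases t with
      | zero => simp
      | succ t =>
        rw [Walk.getVert_zero, Walk.getVert_cons_succ]
        have h1 : G.dist x y = 1 := SimpleGraph.dist_eq_one_iff_adj.mpr h
        have h2 := ih 0 t (Nat.zero_le t)
        rw [Walk.getVert_zero] at h2
        have h3 := hG.dist_triangle (u := x) (v := y) (w := p.getVert t)
        omega
    | succ s =>
      cases t with
      | zero => omega
      | succ t =>
        rw [Walk.getVert_cons_succ, Walk.getVert_cons_succ]
        have := ih s t (by omega)
        omega

/-- Exact distances along a geodesic walk. -/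
private lemma geo_dist {V : Type*} {G : SimpleGraph V} (hG : G.Connected) {u v : V}
    (w : G.Walk u v) (hw : w.length = G.dist u v) :
    ∀ s t : ℕ, s ≤ t →
      G.dist (w.getVert s) (w.getVert t) = min t w.length - min s w.length := by
  have hf : ∀ n, n ≤ w.length →
      G.dist u (w.getVert n) = n ∧ G.dist (w.getVert n) v = w.length - n := by
    intro n hn
    have h1 := walk_dist_le hG w 0 n (Nat.zero_le n)
    rw [Walk.getVert_zero] at h1
    have h2 := walk_dist_le hG w n w.length hn
    rw [Walk.getVert_length] at h2
    have h3 := hG.dist_triangle (u := u) (v := w.getVert n) (w := v)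
    omega
  intro s t hst
  rcases le_or_gt t w.length with ht | ht
  · have hs := (hf s (le_trans hst ht)).1
    have htt := (hf t ht).1
    have hd := walk_dist_le hG w s t hst
    have h3 := hG.dist_triangle (u := u) (v := w.getVert s) (w := w.getVert t)
    rw [min_eq_left ht, min_eq_left (le_trans hst ht)]
    omega
  · rcases le_or_gt s w.length with hs | hs
    · rw [w.getVert_of_length_le ht.le, min_eq_right ht.le, min_eq_left hs]
      exact (hf s hs).2
    · rw [w.getVert_of_length_le hs.le, w.getVert_of_length_le ht.le,
        min_eq_right ht.le, min_eq_right hs.le]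
      simp [SimpleGraph.dist_self]

private lemma exists_at_dist {V : Type*} {G : SimpleGraph V} (hG : G.Connected)
    (hfar : ∀ n : ℕ, ∃ a a' : V, n ≤ G.dist a a') (b : V) (n : ℕ) :
    ∃ c : V, G.dist b c = n := by
  obtain ⟨a, a', ha⟩ := hfar (2 * n)
  have h3 := hG.dist_triangle (u := a) (v := b) (w := a')
  have hcomm : G.dist a b = G.dist b a := SimpleGraph.dist_comm
  have : n ≤ G.dist b a ∨ n ≤ G.dist b a' := by omega
  have hc : ∃ c : V, n ≤ G.dist b c := by
    rcases this with h | h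
    · exact ⟨a, h⟩
    · exact ⟨a', h⟩
  obtain ⟨c, hc⟩ := hc
  obtain ⟨w, hw⟩ := hG.exists_walk_length_eq_dist b c
  refine ⟨w.getVert n, ?_⟩
  have := geo_dist hG w hw 0 n (Nat.zero_le n)
  rw [Walk.getVert_zero] at this
  rw [this]
  omega

private lemma key (M₀ : ℝ) (hM0 : 0 ≤ M₀)
    {V : Type} {X : SimpleGraph V} (hX : X.Connected)
    {γ : ℤ → V} (hgeo : IsBiInfGeodesic X γ)
    (hm : ∀ (m : ℕ) (β : Fin (m + 1) → V), IsQuasigeodesic X 5 0 β →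
        β 0 ∈ Set.range γ → β (Fin.last m) ∈ Set.range γ →
        ∀ i : Fin (m + 1), ∃ t : ℤ, (X.dist (β i) (γ t) : ℝ) ≤ M₀)
    {V₁ V₂ : Type} {Y₁ : SimpleGraph V₁} {Y₂ : SimpleGraph V₂}
    (hY₁ : Y₁.Connected) (hY₂ : Y₂.Connected)
    (hfar₂ : ∀ n : ℕ, ∃ c c' : V₂, n ≤ Y₂.dist c c')
    {ι : V₁ × V₂ → V}
    (hι : ∀ p q : V₁ × V₂, X.dist (ι p) (ι q) = Y₁.dist p.1 q.1 + Y₂.dist p.2 q.2)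
    {s₀ s₁ : ℤ} {a a' : V₁} {b b' : V₂}
    (hx : γ s₀ = ι (a, b)) (hy : γ s₁ = ι (a', b'))
    (hle : Y₂.dist b b' ≤ Y₁.dist a a')
    (hbig : 2 * M₀ + 4 < (Y₁.dist a a' : ℝ)) : False := by
  set K : ℕ := ⌈M₀⌉₊ with hKdef
  have hK : M₀ ≤ (K : ℝ) := Nat.le_ceil M₀
  have hK' : (K : ℝ) < M₀ + 1 := Nat.ceil_lt_add_one hM0
  set d₁ : ℕ := Y₁.dist a a' with hd₁def
  set d₂ : ℕ := Y₂.dist b b' with hd₂def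
  have hd1 : 2 * K + 3 ≤ d₁ := by
    have : ((2 * K + 2 : ℕ) : ℝ) < (d₁ : ℝ) := by push_cast; linarith
    exact_mod_cast this
  -- the bump point
  obtain ⟨b'', hb''⟩ := exists_at_dist hY₂ hfar₂ b (d₂ + K + 1)
  set R : ℕ := d₂ + K + 1 with hRdef
  set S : ℕ := Y₂.dist b'' b' with hSdef
  -- geodesic walks
  obtain ⟨w₁, hw₁⟩ := hY₂.exists_walk_length_eq_dist b b''
  obtain ⟨w₂, hw₂⟩ := hY₁.exists_walk_length_eq_dist a a'
  obtain ⟨w₃, hw₃⟩ := hY₂.exists_walk_length_eq_dist b'' b'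
  have hw₁L : w₁.length = R := by rw [hw₁, hb'']
  have hw₂L : w₂.length = d₁ := hw₂
  have hw₃L : w₃.length = S := hw₃
  have F1 : ∀ s t : ℕ, s ≤ t →
      Y₂.dist (w₁.getVert s) (w₁.getVert t) = min t R - min s R := by
    intro s t hst; rw [← hw₁L]; exact geo_dist hY₂ w₁ hw₁ s t hst
  have F2 : ∀ s t : ℕ, s ≤ t →
      Y₁.dist (w₂.getVert s) (w₂.getVert t) = min t d₁ - min s d₁ := by
    intro s t hst; rw [← hw₂L]; exact geo_dist hY₁ w₂ hw₂ s t hst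
  have F3 : ∀ s t : ℕ, s ≤ t →
      Y₂.dist (w₃.getVert s) (w₃.getVert t) = min t S - min s S := by
    intro s t hst; rw [← hw₃L]; exact geo_dist hY₂ w₃ hw₃ s t hst
  have hgR : w₁.getVert R = b'' := by rw [← hw₁L]; exact w₁.getVert_length
  have hS1 : R ≤ d₂ + S := by
    have t1 := hY₂.dist_triangle (u := b) (v := b') (w := b'')
    have c1 : Y₂.dist b' b'' = S := SimpleGraph.dist_comm
    omega
  have hS2 : S ≤ R + d₂ := by
    have t1 := hY₂.dist_triangle (u := b'') (v := b) (w := b')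
    have c1 : Y₂.dist b'' b = R := by rw [SimpleGraph.dist_comm]; exact hb''
    omega
  set L : ℕ := R + d₁ + S with hLdef
  set f : ℕ → V₁ × V₂ := fun n =>
    (w₂.getVert (n - R), if n ≤ R then w₁.getVert n else w₃.getVert (n - R - d₁)) with hfdef
  have hf1 : ∀ n, (f n).1 = w₂.getVert (n - R) := fun n => rfl
  have hf2 : ∀ n, n ≤ R → (f n).2 = w₁.getVert n := by
    intro n h; simp only [hfdef, if_pos h]
  have hf2' : ∀ n, R < n → (f n).2 = w₃.getVert (n - R - d₁) := by
    intro n h; simp only [hfdef, if_neg (not_le.mpr h)]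
  -- master distance estimate
  have Hm : ∀ i j : ℕ, i ≤ j → j ≤ L →
      X.dist (ι (f i)) (ι (f j)) ≤ j - i ∧ j - i ≤ 5 * X.dist (ι (f i)) (ι (f j)) := by
    intro i j hij hjL
    rw [hι, hf1 i, hf1 j]
    have hD1 := F2 (i - R) (j - R) (Nat.sub_le_sub_right hij R)
    rcases le_or_gt j R with hj | hj
    · have hi := le_trans hij hj
      rw [hf2 i hi, hf2 j hj, hD1, F1 i j hij]
      omega
    · rcases le_or_gt i R with hi | hi
      · rw [hf2 i hi, hf2' j hj, hD1]
        have hgi : Y₂.dist (w₁.getVert i) b'' = R - min i R := by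
          have h' := F1 i R hi
          rw [hgR] at h'
          rw [h']; omega
        have hgj : Y₂.dist b'' (w₃.getVert (j - R - d₁)) = min (j - R - d₁) S := by
          have := F3 0 (j - R - d₁) (Nat.zero_le _)
          rw [Walk.getVert_zero] at this
          rw [this]; omega
        have c1 : Y₂.dist b'' (w₁.getVert i) = R - min i R := by
          rw [SimpleGraph.dist_comm]; exact hgi
        have c2 : Y₂.dist (w₃.getVert (j - R - d₁)) b'' = min (j - R - d₁) S := by
          rw [SimpleGraph.dist_comm]; exact hgj
        have t1 := hY₂.dist_triangle (u := w₁.getVert i) (v := b'')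
          (w := w₃.getVert (j - R - d₁))
        have t2 := hY₂.dist_triangle (u := b'') (v := w₁.getVert i)
          (w := w₃.getVert (j - R - d₁))
        have t3 := hY₂.dist_triangle (u := w₁.getVert i) (v := w₃.getVert (j - R - d₁))
          (w := b'')
        rw [hgi, hgj] at t1
        rw [hgj, c1] at t2
        rw [hgi, c2] at t3
        omega
      · rw [hf2' i hi, hf2' j hj, hD1, F3 (i - R - d₁) (j - R - d₁) (by omega)]
        omega
  -- the quasigeodesic
  have hL1 : 1 ≤ d₁ := by omega
  set β : Fin (L + 1) → V := fun i => ι (f (i : ℕ)) with hβdef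
  have HQ2 : ∀ i j : Fin (L + 1), (i : ℕ) ≤ (j : ℕ) →
      |((i : ℕ) : ℝ) - ((j : ℕ) : ℝ)| / 5 - 0 ≤ (X.dist (β i) (β j) : ℝ) ∧
      (X.dist (β i) (β j) : ℝ) ≤ 5 * |((i : ℕ) : ℝ) - ((j : ℕ) : ℝ)| + 0 := by
    intro i j hij
    have hjL : (j : ℕ) ≤ L := Nat.lt_succ_iff.mp j.isLt
    have h := Hm i j hij hjL
    have habs : |((i : ℕ) : ℝ) - ((j : ℕ) : ℝ)| = (((j : ℕ) - (i : ℕ) : ℕ) : ℝ) := by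
      rw [abs_sub_comm, abs_of_nonneg (by
        rw [sub_nonneg]; exact_mod_cast hij)]
      push_cast [Nat.cast_sub hij]
      ring
    rw [habs, sub_zero, add_zero]
    simp only [hβdef]
    have h1R : (X.dist (ι (f (i : ℕ))) (ι (f (j : ℕ))) : ℝ) ≤ (((j : ℕ) - (i : ℕ) : ℕ) : ℝ) := by
      exact_mod_cast h.1
    have h2R : (((j : ℕ) - (i : ℕ) : ℕ) : ℝ) ≤ 5 * (X.dist (ι (f (i : ℕ))) (ι (f (j : ℕ))) : ℝ) := by
      exact_mod_cast h.2
    have h0R : (0 : ℝ) ≤ (((j : ℕ) - (i : ℕ) : ℕ) : ℝ) := Nat.cast_nonneg _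
    constructor
    · rw [div_le_iff₀ (by norm_num : (0:ℝ) < 5)]
      linarith
    · linarith
  have hquasi : IsQuasigeodesic X 5 0 β := by
    constructor
    · intro i
      have hiL : (i : ℕ) < L := i.isLt
      have h := (Hm i (i + 1) (Nat.le_succ _) (by omega)).1
      have hd : X.dist (β i.castSucc) (β i.succ) ≤ 1 := by
        simp only [hβdef, Fin.coe_castSucc, Fin.val_succ]
        omega
      rcases Nat.le_one_iff_eq_zero_or_eq_one.mp hd with h0 | h1
      · left
        exact (hX.dist_eq_zero_iff).mp h0
      · right
        exact SimpleGraph.dist_eq_one_iff_adj.mp h1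
    · intro i j
      rcases le_total (i : ℕ) (j : ℕ) with h | h
      · exact HQ2 i j h
      · obtain ⟨h1, h2⟩ := HQ2 j i h
        rw [SimpleGraph.dist_comm (u := β j)] at h1 h2
        rw [abs_sub_comm] at h1 h2
        exact ⟨h1, h2⟩
  -- endpoints
  have hβ0 : β 0 = γ s₀ := by
    have : f 0 = (a, b) := by
      have e1 : (f 0).1 = a := by rw [hf1, Nat.zero_sub, Walk.getVert_zero]
      have e2 : (f 0).2 = b := by rw [hf2 0 (Nat.zero_le R), Walk.getVert_zero]
      exact Prod.ext e1 e2
    simp only [hβdef, Fin.val_zero, this, hx]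
  have hβL : β (Fin.last L) = γ s₁ := by
    have : f L = (a', b') := by
      have e1 : (f L).1 = a' := by
        rw [hf1]
        exact w₂.getVert_of_length_le (by omega)
      have e2 : (f L).2 = b' := by
        rw [hf2' L (by omega)]
        exact w₃.getVert_of_length_le (by omega)
      exact Prod.ext e1 e2
    simp only [hβdef, Fin.val_last, this, hy]
  -- apply Morse at the bump point
  set r : ℕ := d₁ / 2 with hrdef
  have hr1 : 1 ≤ r := by omega
  have hr2 : r < d₁ := by omega
  obtain ⟨t, ht⟩ := hm L β hquasi ⟨s₀, hβ0.symm⟩ ⟨s₁, hβL.symm⟩ ⟨R + r, by omega⟩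
  have hfp : f (R + r) = (w₂.getVert r, b'') := by
    have e1 : (f (R + r)).1 = w₂.getVert r := by
      rw [hf1, Nat.add_sub_cancel_left]
    have e2 : (f (R + r)).2 = b'' := by
      rw [hf2' (R + r) (by omega)]
      have : R + r - R - d₁ = 0 := by omega
      rw [this, Walk.getVert_zero]
    exact Prod.ext e1 e2
  have hβp : β ⟨R + r, by omega⟩ = ι (w₂.getVert r, b'') := by
    show ι (f (R + r)) = _
    rw [hfp]
  rw [hβp] at ht
  -- distances from the bump point to x and y
  have hpx : X.dist (ι (w₂.getVert r, b'')) (γ s₀) = r + R := by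
    rw [hx, hι]
    have e1 : Y₁.dist (w₂.getVert r) a = r := by
      rw [SimpleGraph.dist_comm]
      have := F2 0 r (Nat.zero_le r)
      rw [Walk.getVert_zero] at this
      rw [this]; omega
    have e2 : Y₂.dist b'' b = R := by rw [SimpleGraph.dist_comm]; exact hb''
    rw [e1, e2]
  have hpy : X.dist (ι (w₂.getVert r, b'')) (γ s₁) = (d₁ - r) + S := by
    rw [hy, hι]
    have e1 : Y₁.dist (w₂.getVert r) a' = d₁ - r := by
      have hgd : w₂.getVert d₁ = a' := w₂.getVert_of_length_le (le_of_eq hw₂L)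
      have := F2 r d₁ (by omega)
      rw [hgd] at this
      rw [this]; omega
    rw [e1]
  -- numeric endgame
  set e : ℕ := X.dist (ι (w₂.getVert r, b'')) (γ t) with hedef
  have he : e ≤ K := by
    have : (e : ℝ) ≤ (K : ℝ) := le_trans ht hK
    exact_mod_cast this
  set u : ℕ := X.dist (γ t) (γ s₀) with hudef
  set v : ℕ := X.dist (γ t) (γ s₁) with hvdef
  have hu1 : r + R ≤ e + u := by
    have t1 := hX.dist_triangle (u := ι (w₂.getVert r, b'')) (v := γ t) (w := γ s₀)
    omega
  have hu2 : u ≤ e + (r + R) := by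
    have t1 := hX.dist_triangle (u := γ t) (v := ι (w₂.getVert r, b'')) (w := γ s₀)
    have c1 : X.dist (γ t) (ι (w₂.getVert r, b'')) = e := SimpleGraph.dist_comm
    omega
  have hv1 : (d₁ - r) + S ≤ e + v := by
    have t1 := hX.dist_triangle (u := ι (w₂.getVert r, b'')) (v := γ t) (w := γ s₁)
    omega
  have hv2 : v ≤ e + ((d₁ - r) + S) := by
    have t1 := hX.dist_triangle (u := γ t) (v := ι (w₂.getVert r, b'')) (w := γ s₁)
    have c1 : X.dist (γ t) (ι (w₂.getVert r, b'')) = e := SimpleGraph.dist_comm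
    omega
  have hD : X.dist (γ s₀) (γ s₁) = d₁ + d₂ := by rw [hx, hy, hι]
  have g1 : (u : ℤ) = |t - s₀| := hgeo t s₀
  have g2 : (v : ℤ) = |t - s₁| := hgeo t s₁
  have g3 : ((d₁ + d₂ : ℕ) : ℤ) = |s₀ - s₁| := by rw [← hD]; exact_mod_cast hgeo s₀ s₁
  have hrr : 2 * r ≤ d₁ ∧ d₁ ≤ 2 * r + 1 := by omega
  rcases abs_cases (t - s₀) with ⟨a1, _⟩ | ⟨a1, _⟩ <;>
    rcases abs_cases (t - s₁) with ⟨a2, _⟩ | ⟨a2, _⟩ <;>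
      rcases abs_cases (s₀ - s₁) with ⟨a3, _⟩ | ⟨a3, _⟩ <;>
        rw [a1] at g1 <;> rw [a2] at g2 <;> rw [a3] at g3 <;> omega


/-- For every Morse gauge `M` there is a constant `C ≥ 0` such that any `M`-Morse bi-infinite
geodesic meets any isometrically embedded product of two graphs of infinite diameter in a
set of diameter at most `C`. -/
theorem morse_inter_product (M : ℝ → ℝ → ℝ) :
    ∃ C : ℝ, 0 ≤ C ∧
      ∀ (V : Type) (X : SimpleGraph V), X.Connected →
      ∀ γ : ℤ → V, IsBiInfGeodesic X γ → IsMorse X M γ →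
      ∀ (V₁ V₂ : Type) (Y₁ : SimpleGraph V₁) (Y₂ : SimpleGraph V₂),
        Y₁.Connected → Y₂.Connected →
        (∀ n : ℕ, ∃ a a' : V₁, n ≤ Y₁.dist a a') →
        (∀ n : ℕ, ∃ b b' : V₂, n ≤ Y₂.dist b b') →
      ∀ ι : V₁ × V₂ → V,
        (∀ p q : V₁ × V₂, X.dist (ι p) (ι q) = Y₁.dist p.1 q.1 + Y₂.dist p.2 q.2) →
      ∀ x ∈ Set.range γ ∩ Set.range ι, ∀ y ∈ Set.range γ ∩ Set.range ι,
        (X.dist x y : ℝ) ≤ C := by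
  have hM0 : 0 ≤ max (M 5 0) 0 := le_max_right _ _
  refine ⟨4 * max (M 5 0) 0 + 8, by linarith, ?_⟩
  intro V X hX γ hgeo hMorse V₁ V₂ Y₁ Y₂ hY₁ hY₂ hfar₁ hfar₂ ι hι x hx y hy
  set M₀ : ℝ := max (M 5 0) 0 with hM₀def
  obtain ⟨⟨s₀, hs₀⟩, ⟨p, hp⟩⟩ := hx
  obtain ⟨⟨s₁, hs₁⟩, ⟨q, hq⟩⟩ := hy
  by_contra hcon
  push_neg at hcon
  have hm : ∀ (m : ℕ) (β : Fin (m + 1) → V), IsQuasigeodesic X 5 0 β →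
      β 0 ∈ Set.range γ → β (Fin.last m) ∈ Set.range γ →
      ∀ i : Fin (m + 1), ∃ t : ℤ, (X.dist (β i) (γ t) : ℝ) ≤ M₀ := by
    intro m β h1 h2 h3 i
    obtain ⟨t, ht⟩ := hMorse 5 0 (by norm_num) le_rfl m β h1 h2 h3 i
    exact ⟨t, le_trans ht (le_max_left _ _)⟩
  obtain ⟨a, b⟩ := p
  obtain ⟨a', b'⟩ := q
  have hxx : γ s₀ = ι (a, b) := hs₀.trans hp.symm
  have hyy : γ s₁ = ι (a', b') := hs₁.trans hq.symm
  have hD : X.dist x y = Y₁.dist a a' + Y₂.dist b b' := by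
    rw [← hp, ← hq]; exact hι (a, b) (a', b')
  rw [hD] at hcon
  push_cast at hcon
  rcases le_total (Y₂.dist b b') (Y₁.dist a a') with hc | hc
  · have hcR : (Y₂.dist b b' : ℝ) ≤ (Y₁.dist a a' : ℝ) := by exact_mod_cast hc
    exact key M₀ hM0 hX hgeo hm hY₁ hY₂ hfar₂ hι hxx hyy hc (by linarith)
  · have hcR : (Y₁.dist a a' : ℝ) ≤ (Y₂.dist b b' : ℝ) := by exact_mod_cast hc
    have hι' : ∀ p q : V₂ × V₁,
        X.dist ((fun r : V₂ × V₁ => ι (r.2, r.1)) p) ((fun r : V₂ × V₁ => ι (r.2, r.1)) q)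
          = Y₂.dist p.1 q.1 + Y₁.dist p.2 q.2 := by
      intro p q
      rw [hι (p.2, p.1) (q.2, q.1)]
      exact add_comm _ _
    have hxx' : γ s₀ = (fun r : V₂ × V₁ => ι (r.2, r.1)) (b, a) := hxx
    have hyy' : γ s₁ = (fun r : V₂ × V₁ => ι (r.2, r.1)) (b', a') := hyy
    exact key M₀ hM0 hX hgeo hm hY₂ hY₁ hfar₁ hι' hxx' hyy' hc (by linarith)
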